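/- Let d ≥ 4 be even and let α, β be fixed-point-free involutions of Fin d (α∘α = id, β∘β = id, and α x ≠ x, β x ≠ x for all x). If the subgroup G = ⟨α, β⟩ of the symmetric group acts transitively on Fin d, then G is imprimitive: there exists a block Λ of G with 1 < |Λ| < d. -/

import Mathlib

/-- A transitive subgroup of the symmetric group on `Fin d` (`d ≥ 4` even) generated by two
fixed-point-free involutions is imprimitive: it has a nontrivial block. -/
theorem imprimitive_of_two_fixed_point_free_involutions
    (d : ℕ) (hd : 4 ≤ d) (hdeven : Even d)
    (α β : Equiv.Perm (Fin d))
    (hα : α * α = 1) (hα' : ∀ x : Fin d, α x ≠ x)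
    (hβ : β * β = 1) (hβ' : ∀ x : Fin d, β x ≠ x)
    (htrans : MulAction.IsPretransitive (Subgroup.closure {α, β}) (Fin d)) :
    ∃ Λ : Set (Fin d),
      MulAction.IsBlock (Subgroup.closure {α, β}) Λ ∧ 1 < Λ.ncard ∧ Λ.ncard < d := by
  haveI : NeZero d := ⟨by omega⟩
  set G := Subgroup.closure ({α, β} : Set (Equiv.Perm (Fin d))) with hGdef
  set ρ := α * β with hρdef
  have hαmem : α ∈ G := Subgroup.subset_closure (Set.mem_insert _ _)
  have hβmem : β ∈ G := Subgroup.subset_closure (Set.mem_insert_of_mem _ rfl)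
  have hρmem : ρ ∈ G := mul_mem hαmem hβmem
  have hαi : α⁻¹ = α := by rw [inv_eq_iff_mul_eq_one]; exact hα
  have hβi : β⁻¹ = β := by rw [inv_eq_iff_mul_eq_one]; exact hβ
  -- every element of G conjugates ρ to ρ or ρ⁻¹
  have hconj : ∀ g ∈ G, g * ρ * g⁻¹ = ρ ∨ g * ρ * g⁻¹ = ρ⁻¹ := by
    intro g hg
    induction hg using Subgroup.closure_induction with
    | mem x hx =>
      rcases hx with hx | hx
      · rw [hx]
        right
        rw [hαi, hρdef, mul_inv_rev, hαi, hβi]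
        calc α * (α * β) * α = (α * α) * β * α := by group
        _ = β * α := by rw [hα, one_mul]
      · simp only [Set.mem_singleton_iff] at hx
        rw [hx]
        right
        rw [hβi, hρdef, mul_inv_rev, hαi, hβi]
        calc β * (α * β) * β = β * α * (β * β) := by group
        _ = β * α := by rw [hβ, mul_one]
    | one => left; group
    | mul x y hx hy ihx ihy =>
      have hxy : (x * y) * ρ * (x * y)⁻¹ = x * (y * ρ * y⁻¹) * x⁻¹ := by group
      rcases ihy with h | h <;> rw [hxy, h]
      · exact ihx
      · rcases ihx with h' | h'
        · right
          have : x * ρ⁻¹ * x⁻¹ = (x * ρ * x⁻¹)⁻¹ := by group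
          rw [this, h']
        · left
          have : x * ρ⁻¹ * x⁻¹ = (x * ρ * x⁻¹)⁻¹ := by group
          rw [this, h', inv_inv]
    | inv x hx ih =>
      rcases ih with h | h
      · left
        have hs : x * ρ = ρ * x := by conv_rhs => rw [← h]; rw [inv_mul_cancel_right]
        have hs2 : x⁻¹ * ρ = ρ * x⁻¹ := (Commute.inv_left hs).eq
        rw [hs2, inv_inv, mul_assoc, inv_mul_cancel, mul_one]
      · right
        have hs : x * ρ = ρ⁻¹ * x := by conv_rhs => rw [← h]; rw [inv_mul_cancel_right]
        have hs2 : x⁻¹ * ρ = ρ⁻¹ * x⁻¹ := by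
          have h3 := congrArg (fun t => t⁻¹) hs
          simp only [mul_inv_rev, inv_inv] at h3
          exact h3.symm
        rw [hs2, inv_inv, mul_assoc, inv_mul_cancel, mul_one]
  -- a permutation conjugated to itself or its inverse by all of G generates a normal subgroup
  have key : ∀ (ψ : Equiv.Perm (Fin d)) (hψ : ψ ∈ G),
      (∀ g ∈ G, g * ψ * g⁻¹ = ψ ∨ g * ψ * g⁻¹ = ψ⁻¹) →
      (Subgroup.zpowers (⟨ψ, hψ⟩ : G)).Normal := by
    intro ψ hψ h
    constructor
    intro n hn g
    obtain ⟨k, hk⟩ := Subgroup.mem_zpowers_iff.mp hn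
    rw [← hk]
    have hcoe : ((g * ⟨ψ, hψ⟩ * g⁻¹ : G) : Equiv.Perm (Fin d)) = (↑g : Equiv.Perm (Fin d)) * ψ * (↑g)⁻¹ := by
      push_cast; rfl
    have hconjk : g * (⟨ψ, hψ⟩ : G) ^ k * g⁻¹ = (g * ⟨ψ, hψ⟩ * g⁻¹) ^ k := by
      rw [conj_zpow]
    rcases h (↑g) g.2 with hcase | hcase
    · have : g * ⟨ψ, hψ⟩ * g⁻¹ = (⟨ψ, hψ⟩ : G) := by
        apply Subtype.ext; rw [hcoe]; exact hcase
      rw [hconjk, this]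
      exact Subgroup.zpow_mem _ (Subgroup.mem_zpowers _) k
    · have : g * ⟨ψ, hψ⟩ * g⁻¹ = (⟨ψ, hψ⟩ : G)⁻¹ := by
        apply Subtype.ext; rw [hcoe]; exact hcase
      rw [hconjk, this]
      exact Subgroup.zpow_mem _ (Subgroup.inv_mem _ (Subgroup.mem_zpowers _)) k
  -- membership in the orbit of a zpowers subgroup
  have hmem : ∀ (ψ : Equiv.Perm (Fin d)) (hψ : ψ ∈ G) (x : Fin d),
      x ∈ MulAction.orbit (Subgroup.zpowers (⟨ψ, hψ⟩ : G)) (0 : Fin d) ↔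
        ∃ k : ℤ, (ψ ^ k) 0 = x := by
    intro ψ hψ x
    have hsmul : ∀ (m : ↥(Subgroup.zpowers (⟨ψ, hψ⟩ : G))) (y : Fin d),
        m • y = ((m : G) : Equiv.Perm (Fin d)) y := fun _ _ => rfl
    constructor
    · rintro ⟨m, rfl⟩
      obtain ⟨k, hk⟩ := Subgroup.mem_zpowers_iff.mp m.2
      refine ⟨k, ?_⟩
      simp only [hsmul, ← hk]
      simp [SubgroupClass.coe_zpow]
    · rintro ⟨k, hk⟩
      refine ⟨⟨(⟨ψ, hψ⟩ : G) ^ k, Subgroup.zpow_mem _ (Subgroup.mem_zpowers _) k⟩, ?_⟩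
      simp only [hsmul]
      simpa [SubgroupClass.coe_zpow] using hk
  -- fixed points propagate to zpowers
  have hfix : ∀ (ψ : Equiv.Perm (Fin d)), ψ 0 = 0 → ∀ q : ℤ, (ψ ^ q) 0 = 0 := by
    intro ψ hψ q
    have h0 : ψ ∈ MulAction.stabilizer (Equiv.Perm (Fin d)) (0 : Fin d) :=
      MulAction.mem_stabilizer_iff.mpr hψ
    have := Subgroup.zpow_mem _ h0 q
    exact MulAction.mem_stabilizer_iff.mp this
  -- The orbit of 0 under zpowers ρ
  set Λ : Set (Fin d) := MulAction.orbit (Subgroup.zpowers (⟨ρ, hρmem⟩ : G)) (0 : Fin d) with hΛdef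
  have hΛ0 : (0 : Fin d) ∈ Λ := MulAction.mem_orbit_self 0
  have hΛfin : Λ.Finite := Set.toFinite _
  -- bounding lemma: if ρ^p fixes 0, the orbit has at most p elements
  have hbound : ∀ p : ℕ, 0 < p → (ρ ^ p) 0 = 0 → Λ.ncard ≤ p := by
    intro p hp hfixp
    have hsub : Λ ⊆ Set.range (fun k : Fin p => (ρ ^ (k : ℕ)) 0) := by
      intro y hy
      obtain ⟨k, hk⟩ := (hmem ρ hρmem y).mp hy
      set r := k % (p : ℤ) with hrdef
      have hr0 : 0 ≤ r := Int.emod_nonneg k (by exact_mod_cast hp.ne')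
      have hrp : r < (p : ℤ) := Int.emod_lt_of_pos k (by exact_mod_cast hp)
      have hsplit : ρ ^ k = ρ ^ r * ρ ^ ((p : ℤ) * (k / (p : ℤ))) := by
        rw [← zpow_add]
        congr 1
        have := Int.mul_ediv_add_emod k (p : ℤ)
        omega
      have hfixq : (ρ ^ ((p : ℤ) * (k / (p : ℤ)))) 0 = 0 := by
        rw [zpow_mul]
        have : (ρ ^ (p : ℤ)) 0 = 0 := by rw [zpow_natCast]; exact hfixp
        exact hfix _ this _
      refine ⟨⟨r.toNat, by omega⟩, ?_⟩
      show (ρ ^ ((r.toNat : ℤ).toNat)) 0 = y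
      rw [← hk, hsplit]
      have h1 : ((r.toNat : ℤ).toNat) = r.toNat := by omega
      rw [h1]
      have h2 : ρ ^ (r.toNat) = ρ ^ r := by
        rw [← zpow_natCast]; congr 1; omega
      rw [h2, Equiv.Perm.mul_apply, hfixq]
    calc Λ.ncard ≤ (Set.range fun k : Fin p => (ρ ^ (k : ℕ)) 0).ncard :=
          Set.ncard_le_ncard hsub (Set.toFinite _)
    _ = ((fun k : Fin p => (ρ ^ (k : ℕ)) 0) '' Set.univ).ncard := by rw [Set.image_univ]
    _ ≤ (Set.univ : Set (Fin p)).ncard := Set.ncard_image_le (Set.toFinite _)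
    _ = p := by rw [Set.ncard_univ, Nat.card_eq_fintype_card, Fintype.card_fin]
  have hΛled : Λ.ncard ≤ d := by
    calc Λ.ncard ≤ (Set.univ : Set (Fin d)).ncard :=
          Set.ncard_le_ncard (Set.subset_univ _) (Set.toFinite _)
    _ = d := by rw [Set.ncard_univ, Nat.card_eq_fintype_card, Fintype.card_fin]
  -- main case split
  by_cases h1 : 1 < Λ.ncard
  · by_cases h2 : Λ.ncard < d
    · -- middle case: Λ itself is the block
      haveI := key ρ hρmem hconj
      exact ⟨Λ, MulAction.IsBlock.orbit_of_normal 0, h1, h2⟩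
    · -- orbit is everything: use ρ^(d/2)
      have hΛd : Λ.ncard = d := le_antisymm hΛled (by omega)
      -- pigeonhole: some power of ρ fixes 0
      obtain ⟨i, j, hij, hfij⟩ :=
        Fintype.exists_ne_map_eq_of_card_lt (fun k : Fin (d + 1) => (ρ ^ (k : ℕ)) 0)
          (by simp)
      -- wlog i < j
      have hper : ∀ i j : Fin (d + 1), (i : ℕ) < j →
          (ρ ^ (i : ℕ)) 0 = (ρ ^ (j : ℕ)) 0 → (ρ ^ ((j : ℕ) - i)) 0 = 0 := by
        intro i j hlt heq
        have hsplit : ρ ^ (j : ℕ) = ρ ^ (i : ℕ) * ρ ^ ((j : ℕ) - i) := by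
          rw [← pow_add]; congr 1; omega
        rw [hsplit, Equiv.Perm.mul_apply] at heq
        exact ((ρ ^ (i : ℕ)).injective heq.symm)
      have hpd : (ρ ^ d) 0 = 0 := by
        have hex : ∃ p : ℕ, 0 < p ∧ p ≤ d ∧ (ρ ^ p) 0 = 0 := by
          rcases lt_or_gt_of_ne (fun h : (i : ℕ) = (j : ℕ) => hij (Fin.ext h)) with h | h
          · exact ⟨(j : ℕ) - i, by omega, by have := j.isLt; omega, hper i j h hfij⟩
          · exact ⟨(i : ℕ) - j, by omega, by have := i.isLt; omega, hper j i h hfij.symm⟩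
        obtain ⟨p, hp0, hpdle, hpfix⟩ := hex
        have := hbound p hp0 hpfix
        have hpd' : p = d := by omega
        rwa [hpd'] at hpfix
      set σ := ρ ^ (d / 2) with hσdef
      obtain ⟨c, hc⟩ := hdeven
      have hd2 : d / 2 + d / 2 = d := by omega
      have hσσ : σ (σ 0) = 0 := by
        have : σ * σ = ρ ^ d := by rw [hσdef, ← pow_add, hd2]
        have h' := congrArg (fun f : Equiv.Perm (Fin d) => f 0) this
        simpa [Equiv.Perm.mul_apply, hpd] using h'
      have hσ0 : σ 0 ≠ 0 := by
        intro h
        have := hbound (d / 2) (by omega) h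
        omega
      have hσmem : σ ∈ G := pow_mem hρmem _
      have hconjσ : ∀ g ∈ G, g * σ * g⁻¹ = σ ∨ g * σ * g⁻¹ = σ⁻¹ := by
        intro g hg
        have : g * σ * g⁻¹ = (g * ρ * g⁻¹) ^ (d / 2) := by rw [conj_pow]
        rcases hconj g hg with h | h
        · left; rw [this, h]
        · right; rw [this, h, inv_pow]
      haveI := key σ hσmem hconjσ
      refine ⟨MulAction.orbit (Subgroup.zpowers (⟨σ, hσmem⟩ : G)) (0 : Fin d),
        MulAction.IsBlock.orbit_of_normal 0, ?_⟩
      have horb : MulAction.orbit (Subgroup.zpowers (⟨σ, hσmem⟩ : G)) (0 : Fin d)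
          = {0, σ 0} := by
        apply Set.eq_of_subset_of_subset
        · intro y hy
          obtain ⟨k, hk⟩ := (hmem σ hσmem y).mp hy
          have hσ2 : (σ ^ (2 : ℤ)) 0 = 0 := by
            have : σ ^ (2 : ℤ) = σ * σ := by
              rw [show (2 : ℤ) = (2 : ℕ) by rfl, zpow_natCast, pow_two]
            rw [this, Equiv.Perm.mul_apply, hσσ]
          have heven : ∀ q : ℤ, (σ ^ (2 * q)) 0 = 0 := by
            intro q
            rw [zpow_mul]
            exact hfix _ hσ2 q
          rcases Int.even_or_odd k with ⟨q, hq⟩ | ⟨q, hq⟩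
          · left
            rw [← hk, hq]
            have : q + q = 2 * q := by ring
            rw [this]; exact heven q
          · right
            rw [← hk, hq]
            have : σ ^ (2 * q + 1) = σ * σ ^ (2 * q) := by
              rw [← zpow_one_add]; congr 1; ring
            rw [this, Equiv.Perm.mul_apply, heven q]
            rfl
        · intro y hy
          rcases hy with hy | hy
          · rw [hy]; exact MulAction.mem_orbit_self 0
          · rw [hy]
            exact (hmem σ hσmem _).mpr ⟨1, by rw [zpow_one]⟩
      rw [horb, Set.ncard_pair (Ne.symm hσ0)]
      omega
  · -- orbit of 0 has one element: contradiction with transitivity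
    exfalso
    have hρ0 : ρ 0 = 0 := by
      have hmem1 : ρ 0 ∈ Λ := (hmem ρ hρmem _).mpr ⟨1, by rw [zpow_one]⟩
      have hle1 : Λ.ncard ≤ 1 := by omega
      exact (Set.ncard_le_one hΛfin).mp hle1 _ hmem1 _ hΛ0
    have hαα : ∀ x : Fin d, α (α x) = x := by
      intro x
      have := Equiv.ext_iff.mp hα x
      simpa [Equiv.Perm.mul_apply] using this
    have hβ0 : β 0 = α 0 := by
      have : α (β 0) = 0 := hρ0
      have h' := congrArg α this
      rwa [hαα] at h'
    set S : Set (Fin d) := {0, α 0} with hSdef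
    have hne : (0 : Fin d) ≠ α 0 := (hα' 0).symm
    -- every element of G preserves S
    have hpres : ∀ g ∈ G, g 0 ∈ S ∧ g (α 0) ∈ S := by
      intro g hg
      induction hg using Subgroup.closure_induction with
      | mem x hx =>
        rcases hx with hx | hx
        · rw [hx]
          exact ⟨Or.inr rfl, Or.inl (hαα 0)⟩
        · simp only [Set.mem_singleton_iff] at hx
          rw [hx]
          refine ⟨Or.inr hβ0, Or.inl ?_⟩
          rw [← hβ0]
          have := Equiv.ext_iff.mp hβ 0
          simpa [Equiv.Perm.mul_apply] using this
      | one => exact ⟨Or.inl rfl, Or.inr rfl⟩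
      | mul x y hx hy ihx ihy =>
        have h0 : (x * y) 0 = x (y 0) := rfl
        have h1 : (x * y) (α 0) = x (y (α 0)) := rfl
        constructor
        · rw [h0]
          rcases ihy.1 with h | h <;> rw [h]
          · exact ihx.1
          · exact ihx.2
        · rw [h1]
          rcases ihy.2 with h | h <;> rw [h]
          · exact ihx.1
          · exact ihx.2
      | inv x hx ih =>
        -- x maps S bijectively onto S
        have hxne : x 0 ≠ x (α 0) := fun h => hne (x.injective h)
        have hcases : (x 0 = 0 ∧ x (α 0) = α 0) ∨ (x 0 = α 0 ∧ x (α 0) = 0) := by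
          rcases ih.1 with h | h <;> rcases ih.2 with h' | h'
          · exact absurd (h.trans h'.symm) hxne
          · exact Or.inl ⟨h, h'⟩
          · exact Or.inr ⟨h, h'⟩
          · exact absurd (h.trans h'.symm) hxne
        have hinvap : ∀ a b : Fin d, x a = b → x⁻¹ b = a := by
          intro a b hab
          rw [← hab]
          exact x.symm_apply_apply a
        rcases hcases with ⟨h, h'⟩ | ⟨h, h'⟩
        · exact ⟨Or.inl (hinvap _ _ h), Or.inr (hinvap _ _ h')⟩
        · exact ⟨Or.inr (hinvap _ _ h'), Or.inl (hinvap _ _ h)⟩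
    -- pick a point outside S
    have hSncard : S.ncard ≤ 2 := by
      calc S.ncard ≤ ({α 0} : Set (Fin d)).ncard + 1 := Set.ncard_insert_le _ _
      _ ≤ 2 := by rw [Set.ncard_singleton]
    have hSne : S ≠ Set.univ := by
      intro h
      have : (Set.univ : Set (Fin d)).ncard = d := by
        rw [Set.ncard_univ, Nat.card_eq_fintype_card, Fintype.card_fin]
      rw [h, this] at hSncard
      omega
    obtain ⟨x, hx⟩ : ∃ x : Fin d, x ∉ S := by
      by_contra h
      push_neg at h
      exact hSne (Set.eq_univ_of_forall h)
    obtain ⟨g, hg⟩ := htrans.exists_smul_eq (0 : Fin d) x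
    have : (↑g : Equiv.Perm (Fin d)) 0 ∈ S := (hpres ↑g g.2).1
    rw [show ((↑g : Equiv.Perm (Fin d)) 0) = g • (0 : Fin d) from rfl, hg] at this
    exact hx this
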